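/- arXiv:1709.06170 — 13 statements merged into one kernel-verified Lean document; each statement's English description precedes it below -/
import Mathlib

section
/- Let P be a dcpo and let G be a set of preclosure maps on P. Then the set Fix(G) of common fixed points of all maps in G is a closure system in P: for every x in P the set {y ∈ Fix(G) | x ≤ y} has a least element. Moreover, the map sending each x in P to the least element of {y ∈ Fix(G) | x ≤ y} is a closure operator on P, and it is the least closure operator on P lying (pointwise) above every map in G. -/
/-- A dcpo: every nonempty directed subset has a least upper bound. -/
def IsDcpo (P : Type*) [PartialOrder P] : Prop :=
  ∀ D : Set P, D.Nonempty → DirectedOn (· ≤ ·) D → ∃ s, IsLUB D s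

/-- A preclosure map: monotone and inflationary. -/
def IsPreclosure {P : Type*} [PartialOrder P] (f : P → P) : Prop :=
  Monotone f ∧ ∀ x, x ≤ f x

/-- A closure operator: monotone, inflationary, idempotent. -/
def IsClosureOp {P : Type*} [PartialOrder P] (f : P → P) : Prop :=
  Monotone f ∧ (∀ x, x ≤ f x) ∧ ∀ x, f (f x) = f x

/-- Common fixed points of a set of maps. -/
def FixSet {P : Type*} (G : Set (P → P)) : Set P := {x | ∀ g ∈ G, g x = x}

theorem stmt0 {P : Type*} [PartialOrder P] (hP : IsDcpo P)
    (G : Set (P → P)) (hG : ∀ g ∈ G, IsPreclosure g) :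
    (∀ x : P, ∃ m, IsLeast {y | y ∈ FixSet G ∧ x ≤ y} m) ∧
    ∀ h : P → P, (∀ x, IsLeast {y | y ∈ FixSet G ∧ x ≤ y} (h x)) →
      IsClosureOp h ∧ (∀ g ∈ G, ∀ x, g x ≤ h x) ∧
      ∀ k : P → P, IsClosureOp k → (∀ g ∈ G, ∀ x, g x ≤ k x) → ∀ x, h x ≤ k x := by
  constructor
  · intro x
    -- T : elements above x and below every common fixed point above x
    set T : Set P := {y | x ≤ y ∧ ∀ z ∈ FixSet G, x ≤ z → y ≤ z} with hT
    have hxT : x ∈ T := ⟨le_rfl, fun z _ hz => hz⟩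
    -- Zorn on T
    obtain ⟨m, hm⟩ := zorn_le₀ T (by
      intro c hcT hc
      rcases c.eq_empty_or_nonempty with rfl | hne
      · exact ⟨x, hxT, fun z hz => absurd hz (Set.notMem_empty z)⟩
      · obtain ⟨s, hs⟩ := hP c hne (hc.directedOn)
        refine ⟨s, ⟨?_, ?_⟩, fun z hz => hs.1 hz⟩
        · obtain ⟨y, hy⟩ := hne
          exact (hcT hy).1.trans (hs.1 hy)
        · intro z hzF hxz
          exact hs.2 fun y hy => (hcT hy).2 z hzF hxz)
    -- m is a common fixed point
    have hmF : m ∈ FixSet G := by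
      intro g hg
      have hTg : g m ∈ T := by
        refine ⟨hm.1.1.trans ((hG g hg).2 m), ?_⟩
        intro z hzF hxz
        calc g m ≤ g z := (hG g hg).1 (hm.1.2 z hzF hxz)
          _ = z := hzF g hg
      exact le_antisymm (hm.le_of_ge hTg ((hG g hg).2 m)) ((hG g hg).2 m)
    exact ⟨m, ⟨hmF, hm.1.1⟩, fun z hz => hm.1.2 z hz.1 hz.2⟩
  · intro h hh
    have hmono : Monotone h := by
      intro a b hab
      exact (hh a).2 ⟨(hh b).1.1, hab.trans (hh b).1.2⟩
    have hinfl : ∀ x, x ≤ h x := fun x => (hh x).1.2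
    have hidem : ∀ x, h (h x) = h x := fun x =>
      le_antisymm ((hh (h x)).2 ⟨(hh x).1.1, le_rfl⟩) (hinfl _)
    refine ⟨⟨hmono, hinfl, hidem⟩, ?_, ?_⟩
    · intro g hg x
      calc g x ≤ g (h x) := (hG g hg).1 (hinfl x)
        _ = h x := (hh x).1.1 g hg
    · intro k hk hgk x
      refine (hh x).2 ⟨?_, hk.2.1 x⟩
      intro g hg
      exact le_antisymm ((hgk g hg (k x)).trans (hk.2.2 x).le) ((hG g hg).2 _)
end

section
/- (Induction principle.) Let P be a dcpo, let G be a set of preclosure maps on P, and let h be the closure operator on P sending each x to the least common fixed point of G above x. If a subset A of P is closed under least upper bounds of its nonempty directed subsets (i.e., for every nonempty directed D ⊆ A, the least upper bound of D in P belongs to A) and is closed under every map in G (g(A) ⊆ A for all g ∈ G), then A is closed under h: h(A) ⊆ A. -/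
theorem stmt1 {P : Type*} [PartialOrder P] (hP : IsDcpo P)
    (G : Set (P → P)) (hG : ∀ g ∈ G, IsPreclosure g)
    (h : P → P) (hh : ∀ x, IsLeast {y | y ∈ FixSet G ∧ x ≤ y} (h x))
    (A : Set P)
    (hdir : ∀ D : Set P, D ⊆ A → D.Nonempty → DirectedOn (· ≤ ·) D →
      ∀ s, IsLUB D s → s ∈ A)
    (hclosed : ∀ g ∈ G, ∀ x ∈ A, g x ∈ A) :
    ∀ x ∈ A, h x ∈ A := by
  intro x hx
  obtain ⟨⟨hfix, hxle⟩, hleast⟩ := hh x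
  set C : Set P := {y | y ∈ A ∧ x ≤ y ∧ y ≤ h x} with hC
  have hzorn : ∀ c ⊆ C, IsChain (· ≤ ·) c → ∀ y ∈ c, ∃ ub ∈ C, ∀ z ∈ c, z ≤ ub := by
    intro c hcC hchain y hy
    have hdirc : DirectedOn (· ≤ ·) c := hchain.directedOn
    obtain ⟨s, hs⟩ := hP c ⟨y, hy⟩ hdirc
    refine ⟨s, ⟨hdir c (fun z hz => (hcC hz).1) ⟨y, hy⟩ hdirc s hs, ?_, ?_⟩,
      fun z hz => hs.1 hz⟩
    · exact le_trans (hcC hy).2.1 (hs.1 hy)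
    · exact hs.2 fun z hz => (hcC hz).2.2
  obtain ⟨m, _, hmC, hmax⟩ := zorn_le_nonempty₀ C hzorn x ⟨hx, le_refl x, hxle⟩
  have hmfix : m ∈ FixSet G := by
    intro g hg
    obtain ⟨hmono, hinfl⟩ := hG g hg
    have hgmC : g m ∈ C := ⟨hclosed g hg m hmC.1, le_trans hmC.2.1 (hinfl m),
      (hfix g hg) ▸ hmono hmC.2.2⟩
    exact le_antisymm (hmax hgmC (hinfl m)) (hinfl m)
  have : h x ≤ m := hleast ⟨hmfix, hmC.2.1⟩
  have : m = h x := le_antisymm hmC.2.2 this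
  exact this ▸ hmC.1
end

section
/- (Obverse induction principle.) Let P be a dcpo, let G be a set of preclosure maps on P, and let h be the closure operator on P sending each x to the least common fixed point of G above x. If a subset A of P is inaccessible by directed joins (every nonempty directed subset D of P whose least upper bound lies in A intersects A) and is inversely closed under G (for every g ∈ G and x ∈ P, g(x) ∈ A implies x ∈ A), then A is inversely closed under h: for every x ∈ P, h(x) ∈ A implies x ∈ A. -/
theorem stmt2 {P : Type*} [PartialOrder P] (hP : IsDcpo P)
    (G : Set (P → P)) (hG : ∀ g ∈ G, IsPreclosure g)
    (h : P → P) (hh : ∀ x, IsLeast {y | y ∈ FixSet G ∧ x ≤ y} (h x))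
    (A : Set P)
    (hinacc : ∀ D : Set P, D.Nonempty → DirectedOn (· ≤ ·) D →
      ∀ s, IsLUB D s → s ∈ A → (D ∩ A).Nonempty)
    (hinv : ∀ g ∈ G, ∀ x : P, g x ∈ A → x ∈ A) :
    ∀ x : P, h x ∈ A → x ∈ A := by
  intro x hxA
  -- The family of "closed" sets containing x
  set Closed : Set P → Prop := fun S => x ∈ S ∧ (∀ g ∈ G, ∀ y ∈ S, g y ∈ S) ∧
      (∀ D : Set P, D ⊆ S → D.Nonempty → DirectedOn (· ≤ ·) D →
        ∀ s, IsLUB D s → s ∈ S) with hClosedDef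
  set T : Set P := ⋂₀ {S | Closed S} with hTdef
  have hTsub : ∀ S, Closed S → T ⊆ S := fun S hS => Set.sInter_subset_of_mem hS
  have hTclosed : Closed T := by
    refine ⟨?_, ?_, ?_⟩
    · intro S hS; exact hS.1
    · intro g hg y hy S hS
      exact hS.2.1 g hg y (hy S hS)
    · intro D hD hne hdir s hs S hS
      exact hS.2.2 D (fun d hd => hD hd S hS) hne hdir s hs
  -- Every element of T is ≤ h x
  have hfix : h x ∈ FixSet G := (hh x).1.1
  have hxhx : x ≤ h x := (hh x).1.2
  have hTle : ∀ y ∈ T, y ≤ h x := by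
    have : Closed {y | y ∈ T ∧ y ≤ h x} := by
      refine ⟨⟨hTclosed.1, hxhx⟩, ?_, ?_⟩
      · intro g hg y hy
        refine ⟨hTclosed.2.1 g hg y hy.1, ?_⟩
        calc g y ≤ g (h x) := (hG g hg).1 hy.2
          _ = h x := hfix g hg
      · intro D hD hne hdir s hs
        refine ⟨hTclosed.2.2 D (fun d hd => (hD hd).1) hne hdir s hs, ?_⟩
        exact hs.2 fun d hd => (hD hd).2
    intro y hy
    exact (hTsub _ this hy).2
  -- Zorn: T has a maximal element above x
  obtain ⟨m, hxm, hmT, hmax⟩ := zorn_le_nonempty₀ T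
    (fun c hcT hc y hy => by
      obtain ⟨s, hs⟩ := hP c ⟨y, hy⟩ (hc.directedOn)
      exact ⟨s, hTclosed.2.2 c hcT ⟨y, hy⟩ hc.directedOn s hs, fun z hz => hs.1 hz⟩)
    x hTclosed.1
  -- m is a common fixed point of G
  have hmfix : m ∈ FixSet G := by
    intro g hg
    have hgm : g m ∈ T := hTclosed.2.1 g hg m hmT
    exact le_antisymm (hmax hgm ((hG g hg).2 m)) ((hG g hg).2 m)
  -- hence m = h x, so h x ∈ T
  have hm_eq : m = h x := le_antisymm (hTle m hmT) ((hh x).2 ⟨hmfix, hxm⟩)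
  have hhxT : h x ∈ T := hm_eq ▸ hmT
  -- The induction set
  have hF : Closed {y | y ∈ T ∧ (y ∈ A → x ∈ A)} := by
    refine ⟨⟨hTclosed.1, fun hx => hx⟩, ?_, ?_⟩
    · intro g hg y hy
      exact ⟨hTclosed.2.1 g hg y hy.1, fun hgy => hy.2 (hinv g hg y hgy)⟩
    · intro D hD hne hdir s hs
      refine ⟨hTclosed.2.2 D (fun d hd => (hD hd).1) hne hdir s hs, fun hsA => ?_⟩
      obtain ⟨d, hdD, hdA⟩ := hinacc D hne hdir s hs hsA
      exact (hD hdD).2 hdA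
  exact (hTsub _ hF hhxT).2 hxA
end

section
/- (Tarski's fixed point theorem for dcpos.) Let f be a monotone endofunction on a dcpo P. Then: (i) for every x ∈ P with x ≤ f(x) there exists a least fixed point of f above x, i.e., the set {y ∈ P | f(y) = y and x ≤ y} has a least element; (ii) every nonempty directed subset of the fixed-point set Fix(f) has a least upper bound within the subposet Fix(f); (iii) if P has a least element, then f has a least fixed point. -/
universe u

section Aux

variable {P : Type u} [PartialOrder P]

/-- the iteration set at stage `o` -/
def tarS (f : P → P) (x : P) (F : Ordinal.{u} → P) (o : Ordinal.{u}) : Set P :=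
  insert x {p | ∃ o', ∃ _ : o' < o, p = f (F o')}

open Classical in
/-- transfinite iteration of `f` starting at `x` -/
noncomputable def tarF (hP : IsDcpo P) (f : P → P) (x : P) : Ordinal.{u} → P :=
  Ordinal.lt_wf.fix fun o ih =>
    if h : ∃ s, IsLUB (insert x {p | ∃ o', ∃ h' : o' < o, p = f (ih o' h')}) s
    then h.choose else x

lemma tarF_isLUB (hP : IsDcpo P) (f : P → P) (x : P) (o : Ordinal.{u})
    (hex : ∃ s, IsLUB (tarS f x (tarF hP f x) o) s) :
    IsLUB (tarS f x (tarF hP f x) o) (tarF hP f x o) := by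
  unfold tarF
  rw [WellFounded.fix_eq]
  split
  · exact Exists.choose_spec ‹_›
  · exact absurd hex ‹_›

lemma tarF_spec (hP : IsDcpo P) {f : P → P} (hf : Monotone f) {x : P} (hx : x ≤ f x) :
    ∀ o : Ordinal.{u}, x ≤ tarF hP f x o ∧ tarF hP f x o ≤ f (tarF hP f x o) ∧
      IsLUB (tarS f x (tarF hP f x) o) (tarF hP f x o) := by
  intro o
  induction o using Ordinal.lt_wf.induction with
  | _ o ih =>
  set F := tarF hP f x with hFdef
  -- monotonicity below o
  have hmono : ∀ o1, o1 < o → ∀ o2, o2 ≤ o1 → F o2 ≤ F o1 := by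
    intro o1 h1 o2 h2
    rcases eq_or_lt_of_le h2 with rfl | h2
    · exact le_rfl
    · have h2' := ih o1 h1
      exact le_trans (ih o2 (h2.trans h1)).2.1
        (h2'.2.2.1 (Set.mem_insert_iff.mpr (Or.inr ⟨o2, h2, rfl⟩)))
  -- the set at stage o is directed and nonempty
  have hne : (tarS f x F o).Nonempty := ⟨x, Set.mem_insert _ _⟩
  have hxle : ∀ o', o' < o → x ≤ f (F o') := fun o' h' =>
    le_trans hx (hf (ih o' h').1)
  have hdir : DirectedOn (· ≤ ·) (tarS f x F o) := by
    have hmem : ∀ o', o' < o → f (F o') ∈ tarS f x F o := fun o' h' =>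
      Set.mem_insert_iff.mpr (Or.inr ⟨o', h', rfl⟩)
    intro a ha b hb
    rcases Set.mem_insert_iff.mp ha with ha | ⟨a', ha', haeq⟩
    · rcases Set.mem_insert_iff.mp hb with hb | ⟨b', hb', hbeq⟩
      · exact ⟨x, Set.mem_insert _ _, le_of_eq ha, le_of_eq hb⟩
      · exact ⟨f (F b'), hmem b' hb', ha ▸ hxle b' hb', le_of_eq hbeq⟩
    · rcases Set.mem_insert_iff.mp hb with hb | ⟨b', hb', hbeq⟩
      · exact ⟨f (F a'), hmem a' ha', le_of_eq haeq, hb ▸ hxle a' ha'⟩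
      · rcases le_total a' b' with h | h
        · exact ⟨f (F b'), hmem b' hb',
            haeq ▸ hf (hmono b' hb' a' h), le_of_eq hbeq⟩
        · exact ⟨f (F a'), hmem a' ha',
            le_of_eq haeq, hbeq ▸ hf (hmono a' ha' b' h)⟩
  have hex : ∃ s, IsLUB (tarS f x F o) s := hP _ hne hdir
  have hlub : IsLUB (tarS f x F o) (F o) := tarF_isLUB hP f x o hex
  have hxF : x ≤ F o := hlub.1 (Set.mem_insert _ _)
  refine ⟨hxF, ?_, hlub⟩
  -- F o ≤ f (F o)
  refine hlub.2 ?_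
  rintro a (rfl | ⟨a', ha', rfl⟩)
  · exact le_trans hx (hf hxF)
  · refine hf ?_
    exact le_trans (ih a' ha').2.1 (hlub.1 (Set.mem_insert_iff.mpr (Or.inr ⟨a', ha', rfl⟩)))

lemma tarF_le (hP : IsDcpo P) {f : P → P} (hf : Monotone f) {x : P} (hx : x ≤ f x)
    {z : P} (hz : f z = z) (hxz : x ≤ z) : ∀ o : Ordinal.{u}, tarF hP f x o ≤ z := by
  intro o
  induction o using Ordinal.lt_wf.induction with
  | _ o ih =>
  refine (tarF_spec hP hf hx o).2.2.2 ?_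
  rintro a (rfl | ⟨a', ha', rfl⟩)
  · exact hxz
  · exact le_trans (hf (ih a' ha')) (le_of_eq hz)

lemma least_fixed_above (hP : IsDcpo P) {f : P → P} (hf : Monotone f) {x : P}
    (hx : x ≤ f x) : ∃ m, IsLeast {y | f y = y ∧ x ≤ y} m := by
  obtain ⟨a, b, hab, hne⟩ : ∃ a b, tarF hP f x a = tarF hP f x b ∧ a ≠ b := by
    have := not_injective_of_ordinal (tarF hP f x)
    rw [Function.not_injective_iff] at this
    exact this
  wlog hlt : a < b generalizing a b
  · exact this b a hab.symm hne.symm ((hne.lt_or_gt).resolve_left hlt)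
  set F := tarF hP f x
  have hspec := tarF_spec hP hf hx
  have hfix : f (F a) = F a := by
    refine le_antisymm ?_ ((hspec a).2.1)
    have : f (F a) ≤ F b := (hspec b).2.2.1 (Set.mem_insert_iff.mpr (Or.inr ⟨a, hlt, rfl⟩))
    rwa [← hab] at this
  exact ⟨F a, ⟨hfix, (hspec a).1⟩, fun z hz => tarF_le hP hf hx hz.1 hz.2 a⟩

end Aux

theorem stmt5 {P : Type*} [PartialOrder P] (hP : IsDcpo P)
    (f : P → P) (hf : Monotone f) :
    (∀ x : P, x ≤ f x → ∃ m, IsLeast {y | f y = y ∧ x ≤ y} m) ∧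
    (∀ D : Set P, D ⊆ {y | f y = y} → D.Nonempty → DirectedOn (· ≤ ·) D →
      ∃ s : P, f s = s ∧ (∀ y ∈ D, y ≤ s) ∧
        ∀ z : P, f z = z → (∀ y ∈ D, y ≤ z) → s ≤ z) ∧
    ((∃ b : P, ∀ x : P, b ≤ x) → ∃ m, IsLeast {y | f y = y} m) := by
  refine ⟨fun x hx => least_fixed_above hP hf hx, ?_, ?_⟩
  · intro D hD hne hdir
    obtain ⟨s0, hs0⟩ := hP D hne hdir
    have hs0f : s0 ≤ f s0 := by
      refine hs0.2 fun y hy => ?_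
      calc y = f y := (hD hy).symm
        _ ≤ f s0 := hf (hs0.1 hy)
    obtain ⟨m, hm⟩ := least_fixed_above hP hf hs0f
    exact ⟨m, hm.1.1, fun y hy => le_trans (hs0.1 hy) hm.1.2,
      fun z hz hzD => hm.2 ⟨hz, hs0.2 hzD⟩⟩
  · rintro ⟨b, hb⟩
    obtain ⟨m, hm⟩ := least_fixed_above hP hf (hb (f b))
    exact ⟨m, hm.1.1, fun z hz => hm.2 ⟨hz, hb z⟩⟩
end

section
/- Let P be a dcpo, let G be a set of Scott-continuous preclosure maps on P, and let G* be the set of all finite composites of members of G (including the identity map of P). Then for every x ∈ P the set {u(x) | u ∈ G*} is directed and has a least upper bound; the function h defined by h(x) = ⋁{u(x) | u ∈ G*} is a Scott-continuous closure operator on P; h is the least closure operator on P above every map in G; and Fix(h) equals the set of common fixed points of G. -/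
/-- Scott continuity. -/
def IsScottContinuous {P Q : Type*} [PartialOrder P] [PartialOrder Q]
    (f : P → Q) : Prop :=
  ∀ D : Set P, D.Nonempty → DirectedOn (· ≤ ·) D → ∀ s, IsLUB D s → IsLUB (f '' D) (f s)

/-- All finite composites of members of `G`, including the identity. -/
def Composites {P : Type*} (G : Set (P → P)) : Set (P → P) :=
  {u | ∃ l : List (P → P), (∀ f ∈ l, f ∈ G) ∧ u = l.foldr (· ∘ ·) id}
lemma myScottMono {P Q : Type*} [PartialOrder P] [PartialOrder Q] {f : P → Q}
    (hf : IsScottContinuous f) : Monotone f := by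
  intro x y hxy
  have hlub : IsLUB ({x, y} : Set P) y :=
    ⟨by intro a ha; rcases ha with rfl | rfl <;> simp [hxy],
     fun z hz => hz (by simp)⟩
  have hdir : DirectedOn (· ≤ ·) ({x, y} : Set P) := by
    intro a ha b hb
    exact ⟨y, by simp, by rcases ha with rfl | rfl <;> simp [hxy],
      by rcases hb with rfl | rfl <;> simp [hxy]⟩
  have := hf {x, y} ⟨x, by simp⟩ hdir y hlub
  exact this.1 ⟨x, by simp, rfl⟩

lemma myScottComp {P : Type*} [PartialOrder P] {f g : P → P}
    (hf : IsScottContinuous f) (hg : IsScottContinuous g) :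
    IsScottContinuous (f ∘ g) := by
  intro D hD hdir s hs
  have h1 := hg D hD hdir s hs
  have hdir2 : DirectedOn (· ≤ ·) (g '' D) := by
    rintro _ ⟨a, ha, rfl⟩ _ ⟨b, hb, rfl⟩
    obtain ⟨c, hc, hac, hbc⟩ := hdir a ha b hb
    exact ⟨g c, ⟨c, hc, rfl⟩, myScottMono hg hac, myScottMono hg hbc⟩
  have h2 := hf (g '' D) (hD.image g) hdir2 (g s) h1
  rw [Set.image_comp] at *
  exact h2

lemma myCompMem {P : Type*} {G : Set (P → P)} {u v : P → P}
    (hu : u ∈ Composites G) (hv : v ∈ Composites G) : u ∘ v ∈ Composites G := by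
  obtain ⟨l1, hl1, rfl⟩ := hu
  obtain ⟨l2, hl2, rfl⟩ := hv
  refine ⟨l1 ++ l2, fun f hf => ?_, ?_⟩
  · rcases List.mem_append.1 hf with h | h
    exacts [hl1 f h, hl2 f h]
  · induction l1 with
    | nil => rfl
    | cons a t ih => simp only [List.cons_append, List.foldr_cons] at *; rw [← ih (fun f hf => hl1 f (List.mem_cons_of_mem a hf))]; rfl

lemma myMemProps {P : Type*} [PartialOrder P] {G : Set (P → P)}
    (hG : ∀ g ∈ G, IsPreclosure g ∧ IsScottContinuous g) {u : P → P}
    (hu : u ∈ Composites G) : IsPreclosure u ∧ IsScottContinuous u := by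
  obtain ⟨l, hl, rfl⟩ := hu
  induction l with
  | nil =>
    refine ⟨⟨monotone_id, fun x => le_rfl⟩, ?_⟩
    intro D hD hdir s hs
    simpa using hs
  | cons a t ih =>
    have ha := hG a (hl a (by simp))
    have ht := ih (fun f hf => hl f (List.mem_cons_of_mem a hf))
    simp only [List.foldr_cons]
    constructor
    · exact ⟨ha.1.1.comp ht.1.1, fun x => le_trans (ht.1.2 x) (ha.1.2 _)⟩
    · exact myScottComp ha.2 ht.2

lemma myIdMem {P : Type*} (G : Set (P → P)) : id ∈ Composites G :=
  ⟨[], by simp, rfl⟩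

theorem stmt8 {P : Type*} [PartialOrder P] (hP : IsDcpo P)
    (G : Set (P → P)) (hG : ∀ g ∈ G, IsPreclosure g ∧ IsScottContinuous g) :
    (∀ x : P, DirectedOn (· ≤ ·) {y | ∃ u ∈ Composites G, u x = y} ∧
      ∃ s, IsLUB {y | ∃ u ∈ Composites G, u x = y} s) ∧
    ∀ h : P → P, (∀ x, IsLUB {y | ∃ u ∈ Composites G, u x = y} (h x)) →
      IsClosureOp h ∧ IsScottContinuous h ∧
      (∀ g ∈ G, ∀ x, g x ≤ h x) ∧
      (∀ k : P → P, IsClosureOp k → (∀ g ∈ G, ∀ x, g x ≤ k x) → ∀ x, h x ≤ k x) ∧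
      {x | h x = x} = FixSet G := by
  set S : P → Set P := fun x => {y | ∃ u ∈ Composites G, u x = y} with hS
  have hxmem : ∀ x, x ∈ S x := fun x => ⟨id, myIdMem G, rfl⟩
  have hne : ∀ x, (S x).Nonempty := fun x => ⟨x, hxmem x⟩
  have hdir : ∀ x, DirectedOn (· ≤ ·) (S x) := by
    rintro x _ ⟨u, hu, rfl⟩ _ ⟨v, hv, rfl⟩
    refine ⟨(u ∘ v) x, ⟨u ∘ v, myCompMem hu hv, rfl⟩, ?_, ?_⟩
    · exact (myMemProps hG hu).1.1 ((myMemProps hG hv).1.2 x)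
    · exact (myMemProps hG hu).1.2 (v x)
  refine ⟨fun x => ⟨hdir x, hP _ (hne x) (hdir x)⟩, ?_⟩
  intro h hh
  have hmono : Monotone h := by
    intro x y hxy
    refine (hh x).2 ?_
    rintro _ ⟨u, hu, rfl⟩
    exact le_trans ((myMemProps hG hu).1.1 hxy) ((hh y).1 ⟨u, hu, rfl⟩)
  have hinfl : ∀ x, x ≤ h x := fun x => (hh x).1 (hxmem x)
  have hidem : ∀ x, h (h x) = h x := by
    intro x
    refine le_antisymm ?_ (hinfl (h x))
    refine (hh (h x)).2 ?_
    rintro _ ⟨u, hu, rfl⟩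
    have := (myMemProps hG hu).2 (S x) (hne x) (hdir x) (h x) (hh x)
    refine this.2 ?_
    rintro _ ⟨_, ⟨v, hv, rfl⟩, rfl⟩
    exact (hh x).1 ⟨u ∘ v, myCompMem hu hv, rfl⟩
  have hscott : IsScottContinuous h := by
    intro D hD hdD s hs
    constructor
    · rintro _ ⟨d, hd, rfl⟩
      exact hmono (hs.1 hd)
    · intro b hb
      refine (hh s).2 ?_
      rintro _ ⟨u, hu, rfl⟩
      have := (myMemProps hG hu).2 D hD hdD s hs
      refine this.2 ?_
      rintro _ ⟨d, hd, rfl⟩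
      exact le_trans ((hh d).1 ⟨u, hu, rfl⟩) (hb ⟨d, hd, rfl⟩)
  have hge : ∀ g ∈ G, ∀ x, g x ≤ h x := by
    intro g hg x
    exact (hh x).1 ⟨g ∘ id, ⟨[g], by simpa using hg, rfl⟩, rfl⟩
  have hmin : ∀ k : P → P, IsClosureOp k → (∀ g ∈ G, ∀ x, g x ≤ k x) → ∀ x, h x ≤ k x := by
    intro k hk hgk x
    refine (hh x).2 ?_
    rintro _ ⟨u, ⟨l, hl, rfl⟩, rfl⟩
    induction l with
    | nil => exact hk.2.1 x
    | cons a t ih =>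
      have hih := ih (fun f hf => hl f (List.mem_cons_of_mem a hf))
      calc (List.foldr (· ∘ ·) id (a :: t)) x
          = a (List.foldr (· ∘ ·) id t x) := rfl
        _ ≤ k (List.foldr (· ∘ ·) id t x) := hgk a (hl a (by simp)) _
        _ ≤ k (k x) := hk.1 hih
        _ = k x := hk.2.2 x
  refine ⟨⟨hmono, hinfl, hidem⟩, hscott, hge, hmin, ?_⟩
  ext x
  constructor
  · intro hx g hg
    exact le_antisymm ((hge g hg x).trans (le_of_eq hx)) ((hG g hg).1.2 x)
  · intro hx
    have hfix : ∀ u ∈ Composites G, u x = x := by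
      rintro _ ⟨l, hl, rfl⟩
      induction l with
      | nil => rfl
      | cons a t ih =>
        have hih := ih (fun f hf => hl f (List.mem_cons_of_mem a hf))
        show a (List.foldr (· ∘ ·) id t x) = x
        rw [hih]; exact hx a (hl a (by simp))
    refine le_antisymm ((hh x).2 ?_) (hinfl x)
    rintro _ ⟨u, hu, rfl⟩
    exact le_of_eq (hfix u hu)
end

section
/- Let g be a Scott-continuous preclosure map on a dcpo P. Then for every x ∈ P the set {g^n(x) | n ∈ ℕ} of iterates has a least upper bound; the function h defined by h(x) = ⋁{g^n(x) | n ∈ ℕ} is a Scott-continuous closure operator on P with Fix(h) = Fix(g); and h is the least of all closure operators on P above g. -/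
theorem stmt9 {P : Type*} [PartialOrder P] (hP : IsDcpo P)
    (g : P → P) (hg : IsPreclosure g) (hgsc : IsScottContinuous g) :
    (∀ x : P, ∃ s, IsLUB {y | ∃ n : ℕ, g^[n] x = y} s) ∧
    ∀ h : P → P, (∀ x, IsLUB {y | ∃ n : ℕ, g^[n] x = y} (h x)) →
      IsClosureOp h ∧ IsScottContinuous h ∧
      {x | h x = x} = {x | g x = x} ∧
      ∀ k : P → P, IsClosureOp k → (∀ x, g x ≤ k x) → ∀ x, h x ≤ k x := by
  obtain ⟨gm, gi⟩ := hg
  -- iterates are inflationary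
  have iter_infl : ∀ (n : ℕ) (x : P), x ≤ g^[n] x := by
    intro n x
    induction n with
    | zero => simp
    | succ n ih =>
        rw [Function.iterate_succ_apply']
        exact le_trans ih (gi _)
  have chain : ∀ (x : P), Monotone (fun n : ℕ => g^[n] x) := by
    intro x m n hmn
    obtain ⟨k, rfl⟩ := Nat.exists_eq_add_of_le hmn
    simp only
    rw [Nat.add_comm, Function.iterate_add_apply]
    exact iter_infl k (g^[m] x)
  have Dne : ∀ x : P, ({y | ∃ n : ℕ, g^[n] x = y} : Set P).Nonempty :=
    fun x => ⟨x, 0, rfl⟩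
  have Ddir : ∀ x : P, DirectedOn (· ≤ ·) {y | ∃ n : ℕ, g^[n] x = y} := by
    rintro x _ ⟨m, rfl⟩ _ ⟨n, rfl⟩
    exact ⟨g^[max m n] x, ⟨max m n, rfl⟩, chain x (le_max_left m n),
      chain x (le_max_right m n)⟩
  have ex : ∀ x : P, ∃ s, IsLUB {y | ∃ n : ℕ, g^[n] x = y} s :=
    fun x => hP _ (Dne x) (Ddir x)
  refine ⟨ex, ?_⟩
  intro h hlub
  -- monotone
  have hmono : Monotone h := by
    intro x y hxy
    refine (hlub x).2 ?_
    rintro _ ⟨n, rfl⟩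
    exact le_trans (gm.iterate n hxy) ((hlub y).1 ⟨n, rfl⟩)
  have hinfl : ∀ x, x ≤ h x := fun x => (hlub x).1 ⟨0, rfl⟩
  -- g fixes h x
  have gfix : ∀ x, g (h x) = h x := by
    intro x
    have hlub' := hgsc _ (Dne x) (Ddir x) _ (hlub x)
    refine le_antisymm ?_ (gi _)
    refine hlub'.2 ?_ |>.trans (le_refl _)
    rintro _ ⟨_, ⟨n, rfl⟩, rfl⟩
    exact (hlub x).1 ⟨n + 1, Function.iterate_succ_apply' g n x⟩
  -- if g z = z then h z = z
  have hfix_of_gfix : ∀ z, g z = z → h z = z := by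
    intro z hz
    have : ∀ n : ℕ, g^[n] z = z := by
      intro n
      induction n with
      | zero => rfl
      | succ n ih => rw [Function.iterate_succ_apply', ih, hz]
    refine le_antisymm ((hlub z).2 ?_) (hinfl z)
    rintro _ ⟨n, rfl⟩
    rw [this n]
  have hidem : ∀ x, h (h x) = h x := fun x => hfix_of_gfix _ (gfix x)
  -- Scott continuity of iterates
  have iter_sc : ∀ n : ℕ, IsScottContinuous (g^[n] : P → P) := by
    intro n
    induction n with
    | zero =>
        intro D hne hdir s hs
        simpa using hs
    | succ n ih =>
        intro D hne hdir s hs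
        have h1 := ih D hne hdir s hs
        have hne' : (g^[n] '' D).Nonempty := hne.image _
        have hdir' : DirectedOn (· ≤ ·) (g^[n] '' D) := by
          rintro _ ⟨a, ha, rfl⟩ _ ⟨b, hb, rfl⟩
          obtain ⟨c, hc, hac, hbc⟩ := hdir a ha b hb
          exact ⟨g^[n] c, ⟨c, hc, rfl⟩, gm.iterate n hac, gm.iterate n hbc⟩
        have h2 := hgsc _ hne' hdir' _ h1
        rw [Set.image_image] at h2
        have : (fun x => g (g^[n] x)) = (g^[n + 1] : P → P) := by
          funext x; rw [Function.iterate_succ_apply']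
        rw [this] at h2
        rw [Function.iterate_succ_apply']
        exact h2
  have hsc : IsScottContinuous h := by
    intro D hne hdir s hs
    constructor
    · rintro _ ⟨d, hd, rfl⟩
      exact hmono (hs.1 hd)
    · intro u hu
      refine (hlub s).2 ?_
      rintro _ ⟨n, rfl⟩
      refine (iter_sc n D hne hdir s hs).2 ?_
      rintro _ ⟨d, hd, rfl⟩
      exact le_trans ((hlub d).1 ⟨n, rfl⟩) (hu ⟨d, hd, rfl⟩)
  refine ⟨⟨hmono, hinfl, hidem⟩, hsc, ?_, ?_⟩
  · ext x
    simp only [Set.mem_setOf_eq]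
    constructor
    · intro hx
      refine le_antisymm ?_ (gi x)
      calc g x = g^[1] x := (Function.iterate_one g ▸ rfl)
        _ ≤ h x := (hlub x).1 ⟨1, rfl⟩
        _ = x := hx
    · exact hfix_of_gfix x
  · intro k ⟨km, ki, kid⟩ hgk x
    refine (hlub x).2 ?_
    rintro _ ⟨n, rfl⟩
    induction n with
    | zero => exact ki x
    | succ n ih =>
        rw [Function.iterate_succ_apply']
        calc g (g^[n] x) ≤ k (g^[n] x) := hgk _
          _ ≤ k (k x) := km ih
          _ = k x := kid x
end

section
/- Let P be a domain and let γ be a closure operator on P. For each x ∈ P the set γ(⇟x) = {γ(u) | u ≪ x} is directed; define γ°(x) = ⋁γ(⇟x). Then γ° is a Scott-continuous closure operator on P, γ° ≤ γ pointwise, and every Scott-continuous closure operator β on P with β ≤ γ satisfies β ≤ γ°. In other words, γ° is the greatest Scott-continuous closure operator below γ (the Scott-continuous core of γ). -/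
/-- The way-below relation. -/
def WayBelow {P : Type*} [PartialOrder P] (x y : P) : Prop :=
  ∀ D : Set P, D.Nonempty → DirectedOn (· ≤ ·) D → ∀ s, IsLUB D s → y ≤ s → ∃ d ∈ D, x ≤ d

/-- A domain: a continuous dcpo. -/
def IsContinuousDcpo (P : Type*) [PartialOrder P] : Prop :=
  IsDcpo P ∧ ∀ x : P, {u | WayBelow u x}.Nonempty ∧
    DirectedOn (· ≤ ·) {u | WayBelow u x} ∧ IsLUB {u | WayBelow u x} x

section helpers
variable {P : Type*} [PartialOrder P]

lemma wayBelow_le {u y : P} (h : WayBelow u y) : u ≤ y := by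
  obtain ⟨d, hd, hud⟩ := h {y} ⟨y, rfl⟩
    (directedOn_singleton y) y isLUB_singleton le_rfl
  rcases hd with rfl
  exact hud

lemma wayBelow_le_right {u x y : P} (h : WayBelow u x) (hxy : x ≤ y) : WayBelow u y :=
  fun D hne hdir s hs hys => h D hne hdir s hs (hxy.trans hys)

lemma wayBelow_le_left {v u y : P} (hvu : v ≤ u) (h : WayBelow u y) : WayBelow v y :=
  fun D hne hdir s hs hys => by
    obtain ⟨d, hd, hud⟩ := h D hne hdir s hs hys
    exact ⟨d, hd, hvu.trans hud⟩

lemma wayBelow_interp (hP : IsContinuousDcpo P) {u s : P} (h : WayBelow u s) :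
    ∃ w, WayBelow u w ∧ WayBelow w s := by
  set D' : Set P := {v | ∃ w, WayBelow v w ∧ WayBelow w s} with hD'
  have hne : D'.Nonempty := by
    obtain ⟨w, hw⟩ := (hP.2 s).1
    obtain ⟨v, hv⟩ := (hP.2 w).1
    exact ⟨v, w, hv, hw⟩
  have hdir : DirectedOn (· ≤ ·) D' := by
    rintro v1 ⟨w1, hv1, hw1⟩ v2 ⟨w2, hv2, hw2⟩
    obtain ⟨w3, hw3, h13, h23⟩ := (hP.2 s).2.1 w1 hw1 w2 hw2
    have hv1' : WayBelow v1 w3 := wayBelow_le_right hv1 h13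
    have hv2' : WayBelow v2 w3 := wayBelow_le_right hv2 h23
    obtain ⟨v3, hv3, h1, h2⟩ := (hP.2 w3).2.1 v1 hv1' v2 hv2'
    exact ⟨v3, ⟨w3, hv3, hw3⟩, h1, h2⟩
  have hlub : IsLUB D' s := by
    constructor
    · rintro v ⟨w, hv, hw⟩
      exact (wayBelow_le hv).trans (wayBelow_le hw)
    · intro b hb
      refine (hP.2 s).2.2.2 ?_
      rintro w hw
      refine (hP.2 w).2.2.2 ?_
      intro v hv
      exact hb ⟨w, hv, hw⟩
  obtain ⟨v, ⟨w, hvw, hws⟩, huv⟩ := h D' hne hdir s hlub le_rfl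
  exact ⟨w, wayBelow_le_left huv hvw, hws⟩

end helpers

theorem stmt11 {P : Type*} [PartialOrder P] (hP : IsContinuousDcpo P)
    (γ : P → P) (hγ : IsClosureOp γ) :
    (∀ x : P, DirectedOn (· ≤ ·) (γ '' {u | WayBelow u x})) ∧
    ∀ γ' : P → P, (∀ x, IsLUB (γ '' {u | WayBelow u x}) (γ' x)) →
      IsClosureOp γ' ∧ IsScottContinuous γ' ∧ (∀ x, γ' x ≤ γ x) ∧
      ∀ β : P → P, IsClosureOp β → IsScottContinuous β →
        (∀ x, β x ≤ γ x) → ∀ x, β x ≤ γ' x := by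
  obtain ⟨hdcpo, hdom⟩ := hP
  obtain ⟨hmono, hinfl, hidem⟩ := hγ
  have hdirIm : ∀ x : P, DirectedOn (· ≤ ·) (γ '' {u | WayBelow u x}) := by
    intro x
    rintro _ ⟨u, hu, rfl⟩ _ ⟨v, hv, rfl⟩
    obtain ⟨w, hw, h1, h2⟩ := (hdom x).2.1 u hu v hv
    exact ⟨γ w, ⟨w, hw, rfl⟩, hmono h1, hmono h2⟩
  refine ⟨hdirIm, ?_⟩
  intro γ' hγ'
  have hneIm : ∀ x : P, (γ '' {u | WayBelow u x}).Nonempty := fun x =>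
    (hdom x).1.image γ
  have hmono' : Monotone γ' := by
    intro x y hxy
    refine (hγ' x).2 ?_
    rintro _ ⟨u, hu, rfl⟩
    exact (hγ' y).1 ⟨u, wayBelow_le_right hu hxy, rfl⟩
  have hinfl' : ∀ x, x ≤ γ' x := by
    intro x
    refine (hdom x).2.2.2 ?_
    intro u hu
    exact (hinfl u).trans ((hγ' x).1 ⟨u, hu, rfl⟩)
  have hle : ∀ x, γ' x ≤ γ x := by
    intro x
    refine (hγ' x).2 ?_
    rintro _ ⟨u, hu, rfl⟩
    exact hmono (wayBelow_le hu)
  have hidem' : ∀ x, γ' (γ' x) = γ' x := by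
    intro x
    refine le_antisymm ?_ (hinfl' (γ' x))
    refine (hγ' (γ' x)).2 ?_
    rintro _ ⟨v, hv, rfl⟩
    obtain ⟨_, ⟨u, hu, rfl⟩, hvu⟩ :=
      hv (γ '' {u | WayBelow u x}) (hneIm x) (hdirIm x) (γ' x) (hγ' x) le_rfl
    calc γ v ≤ γ (γ u) := hmono hvu
      _ = γ u := hidem u
      _ ≤ γ' x := (hγ' x).1 ⟨u, hu, rfl⟩
  have hscott : IsScottContinuous γ' := by
    intro D hne hdir s hs
    constructor
    · rintro _ ⟨d, hd, rfl⟩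
      exact hmono' (hs.1 hd)
    · intro b hb
      refine (hγ' s).2 ?_
      rintro _ ⟨u, hu, rfl⟩
      obtain ⟨w, huw, hws⟩ := wayBelow_interp ⟨hdcpo, hdom⟩ hu
      obtain ⟨d, hd, hwd⟩ := hws D hne hdir s hs le_rfl
      have : γ u ≤ γ' d := (hγ' d).1 ⟨u, wayBelow_le_right huw hwd, rfl⟩
      exact this.trans (hb ⟨d, hd, rfl⟩)
  refine ⟨⟨hmono', hinfl', hidem'⟩, hscott, hle, ?_⟩
  intro β hβ hβS hβle x
  have hblub := hβS {u | WayBelow u x} (hdom x).1 (hdom x).2.1 x (hdom x).2.2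
  refine hblub.2 ?_
  rintro _ ⟨u, hu, rfl⟩
  exact (hβle u).trans ((hγ' x).1 ⟨u, hu, rfl⟩)
end

section
/- Let C be a closure system in a domain P, and let dj(C) = {x ∈ P | x is the least upper bound of some nonempty directed subset of C}. Then dj(C) is the least directed-closed closure system in P containing C: dj(C) is a closure system containing C, dj(C) is closed under least upper bounds of its nonempty directed subsets, and dj(C) is contained in every closure system in P that contains C and is closed under least upper bounds of its nonempty directed subsets. -/
/-- A closure system: every element has a least element of the system above it. -/
def IsClosureSystem {P : Type*} [PartialOrder P] (C : Set P) : Prop :=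
  ∀ x : P, ∃ m, IsLeast {y | y ∈ C ∧ x ≤ y} m

/-- The set of least upper bounds of nonempty directed subsets of `C`. -/
def dirJoins {P : Type*} [PartialOrder P] (C : Set P) : Set P :=
  {x | ∃ D : Set P, D ⊆ C ∧ D.Nonempty ∧ DirectedOn (· ≤ ·) D ∧ IsLUB D x}

theorem stmt12 {P : Type*} [PartialOrder P] (hP : IsContinuousDcpo P)
    (C : Set P) (hC : IsClosureSystem C) :
    IsClosureSystem (dirJoins C) ∧ C ⊆ dirJoins C ∧
    (∀ D : Set P, D ⊆ dirJoins C → D.Nonempty → DirectedOn (· ≤ ·) D →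
      ∀ s, IsLUB D s → s ∈ dirJoins C) ∧
    ∀ B : Set P, IsClosureSystem B → C ⊆ B →
      (∀ D : Set P, D ⊆ B → D.Nonempty → DirectedOn (· ≤ ·) D →
        ∀ s, IsLUB D s → s ∈ B) →
      dirJoins C ⊆ B := by
  obtain ⟨hdcpo, hcont⟩ := hP
  choose cl hcl using hC
  have hclC : ∀ x, cl x ∈ C := fun x => (hcl x).1.1
  have hlecl : ∀ x, x ≤ cl x := fun x => (hcl x).1.2
  have hclmin : ∀ x y, y ∈ C → x ≤ y → cl x ≤ y := fun x y hy hxy => (hcl x).2 ⟨hy, hxy⟩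
  have hclmono : ∀ x y, x ≤ y → cl x ≤ cl y :=
    fun x y h => hclmin x (cl y) (hclC y) (h.trans (hlecl y))
  -- way-below basic facts
  have wbmono : ∀ u x y : P, WayBelow u x → x ≤ y → WayBelow u y :=
    fun u x y h hxy D hne hdir s hs hys => h D hne hdir s hs (hxy.trans hys)
  -- key: closure of a way-below element stays below an element of dirJoins C
  have hkey : ∀ d ∈ dirJoins C, ∀ u, WayBelow u d → cl u ≤ d := by
    intro d hd u hu
    obtain ⟨D, hDC, hDne, hDdir, hDl⟩ := hd
    obtain ⟨e, heD, hue⟩ := hu D hDne hDdir d hDl le_rfl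
    exact (hclmin u e (hDC heD) hue).trans (hDl.1 heD)
  -- C ⊆ dirJoins C
  have hsub : C ⊆ dirJoins C := by
    intro x hx
    exact ⟨{x}, Set.singleton_subset_iff.2 hx, ⟨x, rfl⟩,
      fun a ha b hb => ⟨x, rfl, by simp_all, by simp_all⟩, isLUB_singleton⟩
  -- the canonical directed set below x
  have hEC : ∀ x : P, cl '' {u | WayBelow u x} ⊆ C := by
    rintro x _ ⟨u, _, rfl⟩; exact hclC u
  have hEne : ∀ x : P, (cl '' {u | WayBelow u x}).Nonempty :=
    fun x => (hcont x).1.image cl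
  have hEdir : ∀ x : P, DirectedOn (· ≤ ·) (cl '' {u | WayBelow u x}) := by
    intro x
    rintro _ ⟨a, ha, rfl⟩ _ ⟨b, hb, rfl⟩
    obtain ⟨c, hc, hac, hbc⟩ := (hcont x).2.1 a ha b hb
    exact ⟨cl c, ⟨c, hc, rfl⟩, hclmono a c hac, hclmono b c hbc⟩
  refine ⟨?_, hsub, ?_, ?_⟩
  · -- dirJoins C is a closure system
    intro x
    obtain ⟨m, hm⟩ := hdcpo _ (hEne x) (hEdir x)
    refine ⟨m, ⟨⟨_, hEC x, hEne x, hEdir x, hm⟩, ?_⟩, ?_⟩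
    · -- x ≤ m
      exact (hcont x).2.2.2 fun u hu => (hlecl u).trans (hm.1 ⟨u, hu, rfl⟩)
    · -- minimality
      rintro y ⟨hy, hxy⟩
      refine hm.2 ?_
      rintro _ ⟨u, hu, rfl⟩
      exact hkey y hy u (wbmono u x y hu hxy)
  · -- closed under directed sups
    intro D hD hDne hDdir s hs
    refine ⟨cl '' {u | ∃ d ∈ D, WayBelow u d}, ?_, ?_, ?_, ?_, ?_⟩
    · rintro _ ⟨u, _, rfl⟩; exact hclC u
    · obtain ⟨d, hd⟩ := hDne
      obtain ⟨u, hu⟩ := (hcont d).1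
      exact ⟨cl u, u, ⟨d, hd, hu⟩, rfl⟩
    · rintro _ ⟨a, ⟨d1, hd1, ha⟩, rfl⟩ _ ⟨b, ⟨d2, hd2, hb⟩, rfl⟩
      obtain ⟨d3, hd3, h13, h23⟩ := hDdir d1 hd1 d2 hd2
      obtain ⟨c, hc, hac, hbc⟩ := (hcont d3).2.1 a (wbmono a d1 d3 ha h13)
        b (wbmono b d2 d3 hb h23)
      exact ⟨cl c, ⟨c, ⟨d3, hd3, hc⟩, rfl⟩, hclmono a c hac, hclmono b c hbc⟩
    · rintro _ ⟨u, ⟨d, hd, hu⟩, rfl⟩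
      exact (hkey d (hD hd) u hu).trans (hs.1 hd)
    · intro b hb
      refine hs.2 fun d hd => ?_
      refine (hcont d).2.2.2 fun u hu => ?_
      exact (hlecl u).trans (hb ⟨u, ⟨d, hd, hu⟩, rfl⟩)
  · -- minimality among directed-closed closure systems
    intro B _ hCB hBcl x hx
    obtain ⟨D, hDC, hDne, hDdir, hDl⟩ := hx
    exact hBcl D (hDC.trans hCB) hDne hDdir x hDl
end

section
/- Let P be a preframe and let Γ be a set of prenuclei on P. Then the set Fix(Γ) of common fixed points of Γ is a closure system in P, and the closure operator δ sending each x ∈ P to the least common fixed point of Γ above x preserves binary meets: δ(x ⊓ y) = δ(x) ⊓ δ(y) for all x, y ∈ P. Hence the least closure operator above a set of prenuclei on a preframe is a nucleus; in particular, the join in the complete lattice of closure operators of any set of nuclei on P is a nucleus. -/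
/-- A preframe: a meet-semilattice which is a dcpo and in which binary meets
distribute over directed joins. -/
def IsPreframe (P : Type*) [SemilatticeInf P] : Prop :=
  IsDcpo P ∧ ∀ (x : P) (D : Set P), D.Nonempty → DirectedOn (· ≤ ·) D →
    ∀ s, IsLUB D s → IsLUB ((fun d => x ⊓ d) '' D) (x ⊓ s)

/-- A prenucleus: a monotone inflationary map preserving binary meets. -/
def IsPrenucleus {P : Type*} [SemilatticeInf P] (f : P → P) : Prop :=
  Monotone f ∧ (∀ x, x ≤ f x) ∧ ∀ x y, f (x ⊓ y) = f x ⊓ f y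

section Aux14
variable {P : Type*} [SemilatticeInf P]

inductive Gen14 (Γ : Set (P → P)) : (P → P) → Prop where
  | base {γ : P → P} (h : γ ∈ Γ) : Gen14 Γ γ
  | id' : Gen14 Γ (fun x => x)
  | comp {f g : P → P} : Gen14 Γ f → Gen14 Γ g → Gen14 Γ (fun x => f (g x))
  | sup {D : Set (P → P)} {h : P → P} (hD : ∀ f ∈ D, Gen14 Γ f) (hne : D.Nonempty)
      (hdir : DirectedOn (fun f g => ∀ x, f x ≤ g x) D)
      (hlub : ∀ x, IsLUB ((fun f => f x) '' D) (h x)) : Gen14 Γ h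

lemma dir_image14 {D : Set (P → P)} (hdir : DirectedOn (fun f g => ∀ x, f x ≤ g x) D)
    (x : P) : DirectedOn (· ≤ ·) ((fun f => f x) '' D) := by
  rintro _ ⟨f, hf, rfl⟩ _ ⟨g, hg, rfl⟩
  obtain ⟨k, hk, hfk, hgk⟩ := hdir f hf g hg
  exact ⟨k x, ⟨k, hk, rfl⟩, hfk x, hgk x⟩

lemma gen14_prenucleus (hP : IsPreframe P) {Γ : Set (P → P)}
    (hΓ : ∀ γ ∈ Γ, IsPrenucleus γ) {f : P → P} (hf : Gen14 Γ f) : IsPrenucleus f := by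
  induction hf with
  | base h => exact hΓ _ h
  | id' => exact ⟨monotone_id, fun x => le_rfl, fun x y => rfl⟩
  | comp hf hg ihf ihg =>
      obtain ⟨fm, fi, fmeet⟩ := ihf
      obtain ⟨gm, gi, gmeet⟩ := ihg
      exact ⟨fun a b hab => fm (gm hab), fun x => (gi x).trans (fi _),
        fun x y => by simp [gmeet, fmeet]⟩
  | @sup D h hD hne hdir hlub ih =>
      refine ⟨?_, ?_, ?_⟩
      · intro a b hab
        refine (hlub a).2 ?_
        rintro _ ⟨f, hfD, rfl⟩
        exact ((ih f hfD).1 hab).trans ((hlub b).1 ⟨f, hfD, rfl⟩)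
      · intro x
        obtain ⟨f, hfD⟩ := hne
        exact ((ih f hfD).2.1 x).trans ((hlub x).1 ⟨f, hfD, rfl⟩)
      · intro x y
        refine le_antisymm ?_ ?_
        · refine (hlub (x ⊓ y)).2 ?_
          rintro _ ⟨f, hfD, rfl⟩
          show f (x ⊓ y) ≤ h x ⊓ h y
          rw [(ih f hfD).2.2]
          exact inf_le_inf ((hlub x).1 ⟨f, hfD, rfl⟩) ((hlub y).1 ⟨f, hfD, rfl⟩)
        · have ney : ((fun f => f y) '' D).Nonempty := hne.image _
          have nex : ((fun f => f x) '' D).Nonempty := hne.image _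
          have L1 := hP.2 (h x) _ ney (dir_image14 hdir y) (h y) (hlub y)
          refine L1.2 ?_
          rintro _ ⟨_, ⟨f, hfD, rfl⟩, rfl⟩
          have L2 := hP.2 (f y) _ nex (dir_image14 hdir x) (h x) (hlub x)
          show h x ⊓ f y ≤ h (x ⊓ y)
          rw [inf_comm (h x) (f y)]
          refine L2.2 ?_
          rintro _ ⟨_, ⟨g, hgD, rfl⟩, rfl⟩
          show f y ⊓ g x ≤ h (x ⊓ y)
          obtain ⟨k, hkD, hfk, hgk⟩ := hdir f hfD g hgD
          have h1 : f y ⊓ g x ≤ k (x ⊓ y) := by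
            rw [(ih k hkD).2.2]
            exact le_trans (inf_le_inf (hfk y) (hgk x)) (le_of_eq (inf_comm _ _))
          exact h1.trans ((hlub (x ⊓ y)).1 ⟨k, hkD, rfl⟩)

lemma gen14_fix {Γ : Set (P → P)} {f : P → P} (hf : Gen14 Γ f)
    {y : P} (hy : y ∈ FixSet Γ) : f y = y := by
  induction hf with
  | base h => exact hy _ h
  | id' => rfl
  | comp hf hg ihf ihg => simp only [ihg, ihf]
  | @sup D h hD hne hdir hlub ih =>
      refine le_antisymm ((hlub y).2 ?_) ?_
      · rintro _ ⟨f, hfD, rfl⟩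
        exact le_of_eq (ih f hfD)
      · obtain ⟨f, hfD⟩ := hne
        calc y = f y := (ih f hfD).symm
        _ ≤ h y := (hlub y).1 ⟨f, hfD, rfl⟩

end Aux14

theorem stmt14 {P : Type*} [SemilatticeInf P] (hP : IsPreframe P)
    (Γ : Set (P → P)) (hΓ : ∀ γ ∈ Γ, IsPrenucleus γ) :
    IsClosureSystem (FixSet Γ) ∧
    ∀ δ : P → P, (∀ x, IsLeast {y | y ∈ FixSet Γ ∧ x ≤ y} (δ x)) →
      ∀ x y : P, δ (x ⊓ y) = δ x ⊓ δ y := by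
  set M : Set (P → P) := {f | Gen14 Γ f} with hM
  have hMdir : DirectedOn (fun f g => ∀ x, f x ≤ g x) M := by
    intro f hf g hg
    refine ⟨fun x => f (g x), Gen14.comp hf hg, ?_, ?_⟩
    · intro x
      exact (gen14_prenucleus hP hΓ hf).1 ((gen14_prenucleus hP hΓ hg).2.1 x)
    · intro x
      exact (gen14_prenucleus hP hΓ hf).2.1 (g x)
  have hMne : M.Nonempty := ⟨_, Gen14.id'⟩
  have hEx : ∀ x : P, ∃ s, IsLUB ((fun f => f x) '' M) s := fun x =>
    hP.1 _ (hMne.image _) (dir_image14 hMdir x)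
  choose d hd using hEx
  have hdGen : Gen14 Γ d := Gen14.sup (fun f hf => hf) hMne hMdir hd
  have hdpre : IsPrenucleus d := gen14_prenucleus hP hΓ hdGen
  have hdfix : ∀ x, d x ∈ FixSet Γ := by
    intro x γ hγ
    refine le_antisymm ?_ ((hΓ γ hγ).2.1 _)
    exact (hd x).1 ⟨fun z => γ (d z), Gen14.comp (Gen14.base hγ) hdGen, rfl⟩
  have hdleast : ∀ x, IsLeast {y | y ∈ FixSet Γ ∧ x ≤ y} (d x) := by
    intro x
    refine ⟨⟨hdfix x, hdpre.2.1 x⟩, ?_⟩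
    rintro y ⟨hy, hxy⟩
    calc d x ≤ d y := hdpre.1 hxy
    _ = y := gen14_fix hdGen hy
  refine ⟨fun x => ⟨d x, hdleast x⟩, ?_⟩
  intro δ hδ x y
  have hδd : ∀ z, δ z = d z := fun z => (hδ z).unique (hdleast z)
  rw [hδd, hδd, hδd, hdpre.2.2]
end

section
/- Let P be a preframe, let β be a nucleus on P, and let Γ be a set of nuclei on P. Let δ be the closure operator on P sending each x to the least common fixed point of Γ above x (the join of Γ), and let δ′ be the closure operator on P sending each x to the least common fixed point of the family {x ↦ β(x) ⊓ γ(x) | γ ∈ Γ} above x (the join of the pointwise meets β ⊓ γ). Then β(x) ⊓ δ(x) = δ′(x) for every x ∈ P. (Hence binary meets distribute over arbitrary joins in the complete lattice of nuclei on a preframe: the nuclei on a preframe form a frame.) -/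
/-- A nucleus on a meet-semilattice: a closure operator preserving binary meets. -/
def IsNucleusOn {P : Type*} [SemilatticeInf P] (ν : P → P) : Prop :=
  Monotone ν ∧ (∀ x, x ≤ ν x) ∧ (∀ x, ν (ν x) = ν x) ∧ ∀ x y, ν (x ⊓ y) = ν x ⊓ ν y

theorem stmt15 {P : Type*} [SemilatticeInf P] (hP : IsPreframe P)
    (β : P → P) (hβ : IsNucleusOn β)
    (Γ : Set (P → P)) (hΓ : ∀ γ ∈ Γ, IsNucleusOn γ)
    (δ δ' : P → P)
    (hδ : ∀ x : P, IsLeast {y | (∀ γ ∈ Γ, γ y = y) ∧ x ≤ y} (δ x))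
    (hδ' : ∀ x : P, IsLeast {y | (∀ γ ∈ Γ, β y ⊓ γ y = y) ∧ x ≤ y} (δ' x)) :
    ∀ x : P, β x ⊓ δ x = δ' x := by
  obtain ⟨hβmono, hβinfl, hβidem, hβinf⟩ := hβ
  intro x
  have hxδ : x ≤ δ x := (hδ x).1.2
  have hxδ' : x ≤ δ' x := (hδ' x).1.2
  have hδfix : ∀ γ ∈ Γ, γ (δ x) = δ x := (hδ x).1.1
  have hδ'fix : ∀ γ ∈ Γ, β (δ' x) ⊓ γ (δ' x) = δ' x := (hδ' x).1.1
  apply le_antisymm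
  · -- hard direction: β x ⊓ δ x ≤ δ' x, via Zorn on the set A
    set A : Set P := {y | x ≤ y ∧ y ≤ δ x ∧ β x ⊓ y ≤ δ' x} with hA
    have hxA : x ∈ A := ⟨le_rfl, hxδ, inf_le_right.trans hxδ'⟩
    -- A is closed under each γ ∈ Γ
    have hγA : ∀ γ ∈ Γ, ∀ y ∈ A, γ y ∈ A := by
      intro γ hγ y hy
      obtain ⟨hγmono, hγinfl, hγidem, hγinf⟩ := hΓ γ hγ
      obtain ⟨hxy, hyδ, hyδ'⟩ := hy
      refine ⟨hxy.trans (hγinfl y), ?_, ?_⟩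
      · exact (hγmono hyδ).trans_eq (hδfix γ hγ)
      · have h1 : β x ⊓ γ y = β x ⊓ γ (β x ⊓ y) := by
          rw [hγinf]
          rw [← inf_assoc]
          congr 1
          exact le_antisymm (le_inf le_rfl (hγinfl (β x))) inf_le_left
        have h2 : β x ⊓ γ (β x ⊓ y) ≤ β (δ' x) ⊓ γ (δ' x) :=
          inf_le_inf (hβmono hxδ') (hγmono hyδ')
        calc β x ⊓ γ y = β x ⊓ γ (β x ⊓ y) := h1
          _ ≤ β (δ' x) ⊓ γ (δ' x) := h2
          _ = δ' x := hδ'fix γ hγ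
    -- A is closed under sups of nonempty chains; apply Zorn
    have hchain : ∀ c ⊆ A, IsChain (· ≤ ·) c → ∀ y ∈ c, ∃ ub ∈ A, ∀ z ∈ c, z ≤ ub := by
      intro c hcA hc y hy
      obtain ⟨s, hs⟩ := hP.1 c ⟨y, hy⟩ hc.directedOn
      refine ⟨s, ⟨(hcA hy).1.trans (hs.1 hy), ?_, ?_⟩, fun z hz => hs.1 hz⟩
      · exact hs.2 fun z hz => (hcA hz).2.1
      · have := hP.2 (β x) c ⟨y, hy⟩ hc.directedOn s hs
        exact this.2 (by rintro _ ⟨z, hz, rfl⟩; exact (hcA hz).2.2)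
    obtain ⟨m, hxm, hmA, hmmax⟩ := zorn_le_nonempty₀ A hchain x hxA
    have hmfix : ∀ γ ∈ Γ, γ m = m := fun γ hγ =>
      le_antisymm (hmmax (hγA γ hγ m hmA) ((hΓ γ hγ).2.1 m)) ((hΓ γ hγ).2.1 m)
    have : δ x ≤ m := (hδ x).2 ⟨hmfix, hxm⟩
    exact le_trans (inf_le_inf_left (β x) this) hmA.2.2
  · -- easy direction: δ' x ≤ β x ⊓ δ x
    refine (hδ' x).2 ⟨fun γ hγ => ?_, le_inf (hβinfl x) hxδ⟩
    obtain ⟨hγmono, hγinfl, hγidem, hγinf⟩ := hΓ γ hγ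
    rw [hβinf, hγinf, hβidem, hδfix γ hγ]
    exact le_antisymm
      (le_inf (inf_le_left.trans inf_le_left) (inf_le_right.trans inf_le_right))
      (le_inf (le_inf inf_le_left (inf_le_right.trans (hβinfl (δ x))))
        (le_inf (inf_le_left.trans (hγinfl (β x))) inf_le_right))
end

section
/- Every Scott-open filter of a frame is nuclear: if L is a frame and V is a filter of L (that is, ⊤ ∈ V, V is closed under binary meets, and V is an upper set) which is inaccessible by directed joins (every nonempty directed subset D of L whose supremum lies in V intersects V), then there exists a nucleus ν on L such that V = {x ∈ L | ν(x) = ⊤}. -/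
theorem stmt17 {L : Type*} [Order.Frame L] (V : Set L)
    (htop : ⊤ ∈ V)
    (hinf : ∀ x ∈ V, ∀ y ∈ V, x ⊓ y ∈ V)
    (hupper : ∀ x ∈ V, ∀ y : L, x ≤ y → y ∈ V)
    (hscott : ∀ D : Set L, D.Nonempty → DirectedOn (· ≤ ·) D →
      sSup D ∈ V → ∃ d ∈ D, d ∈ V) :
    ∃ ν : L → L, Monotone ν ∧ (∀ x, x ≤ ν x) ∧ (∀ x, ν (ν x) = ν x) ∧
      (∀ x y, ν (x ⊓ y) = ν x ⊓ ν y) ∧ V = {x | ν x = ⊤} := by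
  classical
  set S : Set L := {c | ∀ v ∈ V, v ⇨ c ≤ c} with hS
  set ν : L → L := fun a => sInf {c | a ≤ c ∧ c ∈ S} with hν
  -- basic facts
  have hinfl : ∀ a, a ≤ ν a := fun a => le_sInf fun c hc => hc.1
  have hνS : ∀ a, ν a ∈ S := by
    intro a v hv
    refine le_sInf fun c hc => ?_
    calc v ⇨ ν a ≤ v ⇨ c := himp_le_himp_left (sInf_le hc)
      _ ≤ c := hc.2 v hv
  have hmono : Monotone ν := by
    intro a b hab
    exact le_sInf fun c hc => sInf_le ⟨hab.trans hc.1, hc.2⟩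
  have hle : ∀ a c, a ≤ c → c ∈ S → ν a ≤ c := fun a c h1 h2 => sInf_le ⟨h1, h2⟩
  have hidem : ∀ a, ν (ν a) = ν a := fun a =>
    le_antisymm (hle _ _ le_rfl (hνS a)) (hinfl _)
  -- S is an exponential ideal
  have hexp : ∀ x c, c ∈ S → (x ⇨ c) ∈ S := by
    intro x c hc v hv
    have : v ⇨ x ⇨ c = x ⇨ v ⇨ c := by
      rw [himp_himp, himp_himp, inf_comm]
    rw [this]
    exact himp_le_himp_left (hc v hv)
  have hmeet : ∀ x y, ν (x ⊓ y) = ν x ⊓ ν y := by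
    intro x y
    refine le_antisymm (le_inf (hmono inf_le_left) (hmono inf_le_right)) ?_
    have h1 : ν y ≤ x ⇨ ν (x ⊓ y) := by
      refine hle _ _ ?_ (hexp _ _ (hνS _))
      rw [le_himp_iff, inf_comm]
      exact hinfl _
    have h2 : ν x ≤ ν y ⇨ ν (x ⊓ y) := by
      refine hle _ _ ?_ (hexp _ _ (hνS _))
      rw [le_himp_iff]
      calc x ⊓ ν y ≤ ν y ⊓ x := by rw [inf_comm]
        _ ≤ (x ⇨ ν (x ⊓ y)) ⊓ x := inf_le_inf_right _ h1
        _ ≤ ν (x ⊓ y) := by rw [inf_comm]; exact inf_himp_le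
    calc ν x ⊓ ν y ≤ (ν y ⇨ ν (x ⊓ y)) ⊓ ν y := inf_le_inf_right _ h2
      _ ≤ ν (x ⊓ y) := by rw [inf_comm]; exact inf_himp_le
  refine ⟨ν, hmono, hinfl, hidem, hmeet, ?_⟩
  ext x
  simp only [Set.mem_setOf_eq]
  constructor
  · intro hx
    rw [eq_top_iff]
    refine le_sInf fun c hc => ?_
    have : (⊤ : L) ≤ c := by
      have hxc : x ⇨ c = ⊤ := himp_eq_top_iff.2 hc.1
      calc (⊤ : L) = x ⇨ c := hxc.symm
        _ ≤ c := hc.2 x hx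
    exact this
  · intro hx
    by_contra hxV
    -- Zorn: maximal element above x outside V
    obtain ⟨m, hxm, hmax⟩ := zorn_le_nonempty₀ {y : L | y ∉ V}
      (fun c hcV hchain y hyc => by
        refine ⟨sSup c, ?_, fun z hz => le_sSup hz⟩
        intro hsc
        obtain ⟨d, hdc, hdV⟩ := hscott c ⟨y, hyc⟩ hchain.directedOn hsc
        exact hcV hdc hdV) x hxV
    have hmV : m ∉ V := hmax.1
    -- m ∈ S
    have hmS : m ∈ S := by
      intro v hv
      rcases eq_or_lt_of_le (le_himp_iff.2 (inf_le_left : m ⊓ v ≤ m) : m ≤ v ⇨ m) with he | hlt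
      · exact he.ge
      · have hmem : (v ⇨ m) ∈ V := by
          by_contra h2
          exact hlt.not_ge (hmax.2 h2 hlt.le)
        have hvv : v ⊓ (v ⇨ m) ∈ V := hinf v hv _ hmem
        exact absurd (hupper _ hvv m inf_himp_le) hmV
    have : ν x ≤ m := hle _ _ hxm hmS
    rw [hx] at this
    exact hmV.elim (top_le_iff.1 this ▸ htop)
end

section
/- Let P be a default-enabled poset and let G be a set of preclosure maps on P. Then the set Fix(G) of common fixed points of G is a closure system in P, and the map sending each x ∈ P to the least element of {y ∈ Fix(G) | x ≤ y} is a closure operator on P which is the least closure operator on P lying pointwise above every map in G. -/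
/-- A default-enabled poset: every lower bound of any subset lies below
some maximal lower bound of that subset. -/
def DefaultEnabled (P : Type*) [PartialOrder P] : Prop :=
  ∀ X : Set P, ∀ b ∈ lowerBounds X, ∃ m ∈ lowerBounds X, b ≤ m ∧
    ∀ m' ∈ lowerBounds X, m ≤ m' → m' = m

theorem stmt18 {P : Type*} [PartialOrder P] (hP : DefaultEnabled P)
    (G : Set (P → P)) (hG : ∀ g ∈ G, IsPreclosure g) :
    (∀ x : P, ∃ m, IsLeast {y | y ∈ FixSet G ∧ x ≤ y} m) ∧
    ∀ h : P → P, (∀ x, IsLeast {y | y ∈ FixSet G ∧ x ≤ y} (h x)) →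
      IsClosureOp h ∧ (∀ g ∈ G, ∀ x, g x ≤ h x) ∧
      ∀ k : P → P, IsClosureOp k → (∀ g ∈ G, ∀ x, g x ≤ k x) → ∀ x, h x ≤ k x := by
  constructor
  · intro x
    set U : Set P := {y | y ∈ FixSet G ∧ x ≤ y} with hU
    have hxlb : x ∈ lowerBounds U := fun y hy => hy.2
    obtain ⟨m, hm, hxm, hmax⟩ := hP U x hxlb
    have hmfix : m ∈ FixSet G := by
      intro g hg
      obtain ⟨gmono, ginfl⟩ := hG g hg
      have hlb : g m ∈ lowerBounds U := by
        intro y hy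
        calc g m ≤ g y := gmono (hm hy)
          _ = y := hy.1 g hg
      exact hmax (g m) hlb (ginfl m)
    exact ⟨m, ⟨hmfix, hxm⟩, hm⟩
  · intro h hh
    have hfix : ∀ x, h x ∈ FixSet G := fun x => (hh x).1.1
    have hinfl : ∀ x, x ≤ h x := fun x => (hh x).1.2
    have hmono : Monotone h := by
      intro a b hab
      exact (hh a).2 ⟨hfix b, le_trans hab (hinfl b)⟩
    have hidem : ∀ x, h (h x) = h x := by
      intro x
      exact le_antisymm ((hh (h x)).2 ⟨hfix x, le_refl _⟩) (hinfl (h x))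
    refine ⟨⟨hmono, hinfl, hidem⟩, ?_, ?_⟩
    · intro g hg x
      calc g x ≤ g (h x) := (hG g hg).1 (hinfl x)
        _ = h x := hfix x g hg
    · intro k hk hgk x
      refine (hh x).2 ⟨?_, hk.2.1 x⟩
      intro g hg
      exact le_antisymm (le_of_le_of_eq (hgk g hg (k x)) (hk.2.2 x)) ((hG g hg).2 (k x))
end

section
/- Let P be a dcpo. For a subset X of P, let clsys(X) denote the least closure system in P containing X (which exists since the intersection of any family of closure systems in a dcpo is a closure system). Then the closure operator X ↦ clsys(X) on the powerset of P is convex, i.e., satisfies the anti-exchange condition: for every closure system C in P and all x, y ∈ P with x ∉ C and y ∉ C, if clsys(C ∪ {x}) = clsys(C ∪ {y}) then x = y. -/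
/-- The least closure system containing `X`: the intersection of all closure
systems containing `X`. -/
def clsysOf {P : Type*} [PartialOrder P] (X : Set P) : Set P :=
  {y | ∀ C : Set P, IsClosureSystem C → X ⊆ C → y ∈ C}

/-- Adjoining a full lower set `Iic z` to a closure system yields a closure system. -/
lemma isClosureSystem_union_Iic {P : Type*} [PartialOrder P]
    {C : Set P} (hC : IsClosureSystem C) (z : P) :
    IsClosureSystem (C ∪ Set.Iic z) := by
  intro p
  by_cases hpz : p ≤ z
  · exact ⟨p, ⟨Or.inr hpz, le_refl p⟩, fun q hq => hq.2⟩
  · obtain ⟨m, hm⟩ := hC p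
    refine ⟨m, ⟨Or.inl hm.1.1, hm.1.2⟩, ?_⟩
    rintro q ⟨hqC | hqz, hpq⟩
    · exact hm.2 ⟨hqC, hpq⟩
    · exact absurd (le_trans hpq hqz) hpz

/-- If `x ∉ C` and `x ∈ clsysOf (C ∪ {y})`, then `x ≤ y`. -/
lemma le_of_mem_clsysOf {P : Type*} [PartialOrder P]
    {C : Set P} (hC : IsClosureSystem C) {x y : P} (hx : x ∉ C)
    (hmem : x ∈ clsysOf (C ∪ {y})) : x ≤ y := by
  have h := hmem (C ∪ Set.Iic y) (isClosureSystem_union_Iic hC y)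
    (Set.union_subset_union_right C (by simp))
  rcases h with h | h
  · exact absurd h hx
  · exact h

theorem stmt19 {P : Type*} [PartialOrder P] (hP : IsDcpo P)
    (C : Set P) (hC : IsClosureSystem C)
    (x y : P) (hx : x ∉ C) (hy : y ∉ C)
    (heq : clsysOf (C ∪ {x}) = clsysOf (C ∪ {y})) : x = y := by
  have hxmem : x ∈ clsysOf (C ∪ {x}) := fun D _ hD => hD (Or.inr rfl)
  have hymem : y ∈ clsysOf (C ∪ {y}) := fun D _ hD => hD (Or.inr rfl)
  have hxy : x ≤ y := le_of_mem_clsysOf hC hx (heq ▸ hxmem)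
  have hyx : y ≤ x := le_of_mem_clsysOf hC hy (heq ▸ hymem)
  exact le_antisymm hxy hyx
end
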